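/- arXiv:2510.03622 — 5 statements merged into one kernel-verified Lean document; each statement's English description precedes it below -/
import Mathlib

section
/- For every type x, the space L(x) is a finite-dimensional complex vector space, and for all types x, y ∈ Ty the dimension is multiplicative under the parallel product of types: dim_ℂ L(x ⊛ y) = dim_ℂ L(x) · dim_ℂ L(y). -/
inductive Ty (Λ : Type) : Type
  | elem : List Λ → Ty Λ
  | arrow : Ty Λ → Ty Λ → Ty Λ

namespace Ty

variable {Λ : Type}

def ord : Ty Λ → ℕ
  | elem _ => 0
  | arrow a b => 1 + max a.ord b.ord

def par : Ty Λ → Ty Λ → Ty Λ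
  | elem v, elem w => elem (v ++ w)
  | elem v, arrow c d => arrow c (par (elem v) d)
  | arrow a b, elem w => arrow a (par b (elem w))
  | arrow a b, arrow c d =>
    if (arrow a b).ord < (arrow c d).ord then arrow c (par (arrow a b) d)
    else if (arrow a b).ord = (arrow c d).ord then arrow (par a c) (par b d)
    else arrow a (par b (arrow c d))

theorem ord_par (x y : Ty Λ) : (x.par y).ord = max x.ord y.ord := by
  induction x, y using par.induct with
  | case1 v w => simp [par, ord]
  | case2 v c d ih => simp_all [par, ord]
  | case3 a b w ih => simp_all [par, ord]
  | case4 a b c d h ih => rw [par, if_pos h]; simp_all [ord]; omega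
  | case5 a b c d h1 h2 ih1 ih2 => rw [par, if_neg h1, if_pos h2]; simp_all [ord]; omega
  | case6 a b c d h1 h2 ih => rw [par, if_neg h1, if_neg h2]; simp_all [ord]; omega

theorem par_elem_elem (v w : List Λ) : (elem v).par (elem w) = elem (v ++ w) := by
  rw [par]

theorem par_arrow_arrow {a b c d : Ty Λ} (h : (arrow a b).ord = (arrow c d).ord) :
    (arrow a b).par (arrow c d) = arrow (a.par c) (b.par d) := by
  rw [par, if_neg (by omega), if_pos h]

theorem par_lt {x c d : Ty Λ} (h : x.ord < (arrow c d).ord) :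
    x.par (arrow c d) = arrow c (x.par d) := by
  cases x with
  | elem v => rw [par]
  | arrow a b => rw [par, if_pos h]

theorem par_gt {a b y : Ty Λ} (h : y.ord < (arrow a b).ord) :
    (arrow a b).par y = arrow a (b.par y) := by
  cases y with
  | elem w => rw [par]
  | arrow c d => rw [par, if_neg (by omega), if_neg (by omega)]

end Ty

namespace HigherOrder

open scoped TensorProduct ComplexOrder

variable {Λ : Type} (dm : Λ → ℕ)

/-- Dimension of the Hilbert space attached to a word of labels:
`H_ε = H_{A₁} ⊗ ⋯ ⊗ H_{Aₙ}`, with `H_A = ℂ^(dm A)`. -/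
def dimw (w : List Λ) : ℕ := (w.map dm).prod

/-- The family of spaces of higher-order linear maps: `L(ε) = End(H_ε)` for an elementary
type `ε` and `L(a → b) = Hom(L a, L b)`, packaged as objects of `ModuleCat ℂ`. -/
noncomputable def L : Ty Λ → ModuleCat ℂ
  | .elem w => ModuleCat.of ℂ (Matrix (Fin (dimw dm w)) (Fin (dimw dm w)) ℂ)
  | .arrow a b => ModuleCat.of ℂ (↑(L a) →ₗ[ℂ] ↑(L b))

end HigherOrder


open HigherOrder in
theorem L_fd {Λ : Type} (dm : Λ → ℕ) : ∀ x : Ty Λ, FiniteDimensional ℂ ↑(L dm x)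
  | .elem w => by
      show FiniteDimensional ℂ (Matrix (Fin (dimw dm w)) (Fin (dimw dm w)) ℂ)
      infer_instance
  | .arrow a b => by
      have := L_fd dm a; have := L_fd dm b
      show FiniteDimensional ℂ (↑(L dm a) →ₗ[ℂ] ↑(L dm b))
      infer_instance

open HigherOrder in
theorem finrank_par {Λ : Type} (dm : Λ → ℕ) (x y : Ty Λ) :
    Module.finrank ℂ ↑(L dm (x.par y)) =
      Module.finrank ℂ ↑(L dm x) * Module.finrank ℂ ↑(L dm y) := by
  have fd := L_fd dm
  induction x, y using Ty.par.induct with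
  | case1 v w =>
      rw [Ty.par_elem_elem]
      show Module.finrank ℂ (Matrix _ _ ℂ) = Module.finrank ℂ (Matrix _ _ ℂ) * Module.finrank ℂ (Matrix _ _ ℂ)
      erw [Module.finrank_matrix, Module.finrank_matrix, Module.finrank_matrix]
      simp only [Fintype.card_eq_nat_card, Nat.card_fin]
      simp [dimw]
      ring
  | case2 v c d ih =>
      rw [Ty.par_lt (by simp [Ty.ord])]
      show Module.finrank ℂ (↑(L dm c) →ₗ[ℂ] ↑(L dm ((Ty.elem v).par d))) = _
      haveI := fd c; haveI := fd d; haveI := fd ((Ty.elem v).par d)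
      haveI := fd (Ty.arrow c d)
      rw [Module.finrank_linearMap, ih]
      show _ = _ * Module.finrank ℂ (↑(L dm c) →ₗ[ℂ] ↑(L dm d))
      rw [Module.finrank_linearMap]; ring
  | case3 a b w ih =>
      rw [Ty.par_gt (by simp [Ty.ord])]
      show Module.finrank ℂ (↑(L dm a) →ₗ[ℂ] ↑(L dm (b.par (Ty.elem w)))) = _
      haveI := fd a; haveI := fd b; haveI := fd (b.par (Ty.elem w))
      rw [Module.finrank_linearMap, ih]
      show _ = Module.finrank ℂ (↑(L dm a) →ₗ[ℂ] ↑(L dm b)) * _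
      rw [Module.finrank_linearMap]; ring
  | case4 a b c d h ih =>
      rw [Ty.par_lt h]
      show Module.finrank ℂ (↑(L dm c) →ₗ[ℂ] ↑(L dm ((Ty.arrow a b).par d))) = _
      haveI := fd c; haveI := fd ((Ty.arrow a b).par d); haveI := fd a; haveI := fd b; haveI := fd d
      rw [Module.finrank_linearMap, ih]
      show _ = _ * Module.finrank ℂ (↑(L dm c) →ₗ[ℂ] ↑(L dm d))
      rw [Module.finrank_linearMap]; ring
  | case5 a b c d h1 h2 ih1 ih2 =>
      rw [Ty.par_arrow_arrow h2]
      show Module.finrank ℂ (↑(L dm (a.par c)) →ₗ[ℂ] ↑(L dm (b.par d))) = _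
      haveI := fd (a.par c); haveI := fd (b.par d)
      haveI := fd a; haveI := fd b; haveI := fd c; haveI := fd d
      rw [Module.finrank_linearMap, ih1, ih2]
      show _ = Module.finrank ℂ (↑(L dm a) →ₗ[ℂ] ↑(L dm b)) * Module.finrank ℂ (↑(L dm c) →ₗ[ℂ] ↑(L dm d))
      rw [Module.finrank_linearMap, Module.finrank_linearMap]; ring
  | case6 a b c d h1 h2 ih =>
      rw [Ty.par_gt (by simp [Ty.ord] at *; omega)]
      show Module.finrank ℂ (↑(L dm a) →ₗ[ℂ] ↑(L dm (b.par (Ty.arrow c d)))) = _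
      haveI := fd a; haveI := fd (b.par (Ty.arrow c d)); haveI := fd b; haveI := fd (Ty.arrow c d)
      rw [Module.finrank_linearMap, ih]
      show _ = Module.finrank ℂ (↑(L dm a) →ₗ[ℂ] ↑(L dm b)) * _
      rw [Module.finrank_linearMap]; ring

open HigherOrder in
/-- Every space `L x` is a finite-dimensional complex vector space, and the dimension is
multiplicative under the parallel product of types. -/
theorem finiteDimensional_and_finrank_par {Λ : Type} (dm : Λ → ℕ) :
    (∀ x : Ty Λ, FiniteDimensional ℂ ↑(L dm x)) ∧
    (∀ x y : Ty Λ, Module.finrank ℂ ↑(L dm (x.par y)) =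
      Module.finrank ℂ ↑(L dm x) * Module.finrank ℂ ↑(L dm y)) := by
  exact ⟨L_fd dm, finrank_par dm⟩
end

section
/- For all types a, c ∈ Ty, the set of parallel products {ρ ⊛ σ : ρ ∈ L(a), σ ∈ L(c)} spans the complex vector space L(a ⊛ c). -/
namespace HigherOrder

open scoped TensorProduct ComplexOrder

variable {Λ : Type} (dm : Λ → ℕ)

theorem dimw_append (v w : List Λ) : dimw dm (v ++ w) = dimw dm v * dimw dm w := by
  simp [dimw]

def toHom {a b : Ty Λ} (M : ↑(L dm (Ty.arrow a b))) : ↑(L dm a) →ₗ[ℂ] ↑(L dm b) := M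

def ofHom {a b : Ty Λ} (f : ↑(L dm a) →ₗ[ℂ] ↑(L dm b)) : ↑(L dm (Ty.arrow a b)) := f

def toMat {w : List Λ} (A : ↑(L dm (Ty.elem w))) :
    Matrix (Fin (dimw dm w)) (Fin (dimw dm w)) ℂ := A

def ofMat {w : List Λ} (A : Matrix (Fin (dimw dm w)) (Fin (dimw dm w)) ℂ) :
    ↑(L dm (Ty.elem w)) := A

noncomputable def app {a b : Ty Λ} (M : ↑(L dm (Ty.arrow a b))) (ρ : ↑(L dm a)) : ↑(L dm b) :=
  toHom dm M ρ

instance instFinDimL (x : Ty Λ) : FiniteDimensional ℂ ↑(L dm x) := by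
  induction x with
  | elem w => exact inferInstanceAs (FiniteDimensional ℂ (Matrix _ _ ℂ))
  | arrow a b iha ihb => exact inferInstanceAs (FiniteDimensional ℂ (↑(L dm a) →ₗ[ℂ] ↑(L dm b)))

noncomputable def castL {x y : Ty Λ} (h : x = y) : ↑(L dm x) ≃ₗ[ℂ] ↑(L dm y) :=
  h ▸ LinearEquiv.refl ℂ ↑(L dm x)

/-- `L (arrow a b)` is (by definition) a space of linear maps. -/
noncomputable def homEquivL (a b : Ty Λ) :
    ↑(L dm (Ty.arrow a b)) ≃ₗ[ℂ] (↑(L dm a) →ₗ[ℂ] ↑(L dm b)) :=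
  { toFun := toHom dm, invFun := ofHom dm, map_add' := fun _ _ => rfl,
    map_smul' := fun _ _ => rfl, left_inv := fun _ => rfl, right_inv := fun _ => rfl }

/-- `L (elem w)` is (by definition) a space of matrices. -/
noncomputable def matEquivL (w : List Λ) :
    ↑(L dm (Ty.elem w)) ≃ₗ[ℂ] Matrix (Fin (dimw dm w)) (Fin (dimw dm w)) ℂ :=
  { toFun := toMat dm, invFun := ofMat dm, map_add' := fun _ _ => rfl,
    map_smul' := fun _ _ => rfl, left_inv := fun _ => rfl, right_inv := fun _ => rfl }

/-- The parallel product on the level of spaces: the canonical identification of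
`L x ⊗ L y` with `L (x ⊛ y)`. -/
noncomputable def parEquiv : (x y : Ty Λ) →
    (↑(L dm x) ⊗[ℂ] ↑(L dm y)) ≃ₗ[ℂ] ↑(L dm (x.par y))
  | .elem v, .elem w =>
      (TensorProduct.congr (matEquivL dm v) (matEquivL dm w)) ≪≫ₗ
      ((Matrix.stdBasis ℂ (Fin (dimw dm v)) (Fin (dimw dm v))).tensorProduct
          (Matrix.stdBasis ℂ (Fin (dimw dm w)) (Fin (dimw dm w)))).equiv
        (Matrix.stdBasis ℂ (Fin (dimw dm v) × Fin (dimw dm w))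
          (Fin (dimw dm v) × Fin (dimw dm w)))
        (Equiv.prodProdProdComm _ _ _ _) ≪≫ₗ
      Matrix.reindexLinearEquiv ℂ ℂ finProdFinEquiv finProdFinEquiv ≪≫ₗ
      Matrix.reindexLinearEquiv ℂ ℂ (finCongr (dimw_append dm v w).symm)
        (finCongr (dimw_append dm v w).symm) ≪≫ₗ
      (matEquivL dm (v ++ w)).symm ≪≫ₗ
      castL dm (Ty.par_elem_elem v w).symm
  | .elem v, .arrow c d =>
      (TensorProduct.congr (LinearEquiv.refl ℂ _) (homEquivL dm c d)) ≪≫ₗ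
      lTensorHomEquivHomLTensor ℂ ↑(L dm c) ↑(L dm (Ty.elem v)) ↑(L dm d) ≪≫ₗ
      LinearEquiv.arrowCongr (LinearEquiv.refl ℂ _) (parEquiv (Ty.elem v) d) ≪≫ₗ
      (homEquivL dm c ((Ty.elem v).par d)).symm ≪≫ₗ
      castL dm (Ty.par_lt (by simp [Ty.ord])).symm
  | .arrow a b, .elem w =>
      (TensorProduct.congr (homEquivL dm a b) (LinearEquiv.refl ℂ _)) ≪≫ₗ
      rTensorHomEquivHomRTensor ℂ ↑(L dm a) ↑(L dm b) ↑(L dm (Ty.elem w)) ≪≫ₗ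
      LinearEquiv.arrowCongr (LinearEquiv.refl ℂ _) (parEquiv b (Ty.elem w)) ≪≫ₗ
      (homEquivL dm a (b.par (Ty.elem w))).symm ≪≫ₗ
      castL dm (Ty.par_gt (by simp [Ty.ord])).symm
  | .arrow a b, .arrow c d =>
      if h : (Ty.arrow a b).ord < (Ty.arrow c d).ord then
        (TensorProduct.congr (LinearEquiv.refl ℂ _) (homEquivL dm c d)) ≪≫ₗ
        lTensorHomEquivHomLTensor ℂ ↑(L dm c) ↑(L dm (Ty.arrow a b)) ↑(L dm d) ≪≫ₗ
        LinearEquiv.arrowCongr (LinearEquiv.refl ℂ _) (parEquiv (Ty.arrow a b) d) ≪≫ₗ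
        (homEquivL dm c ((Ty.arrow a b).par d)).symm ≪≫ₗ
        castL dm (Ty.par_lt h).symm
      else if h2 : (Ty.arrow a b).ord = (Ty.arrow c d).ord then
        (TensorProduct.congr (homEquivL dm a b) (homEquivL dm c d)) ≪≫ₗ
        homTensorHomEquiv ℂ ↑(L dm a) ↑(L dm c) ↑(L dm b) ↑(L dm d) ≪≫ₗ
        LinearEquiv.arrowCongr (parEquiv a c) (parEquiv b d) ≪≫ₗ
        (homEquivL dm (a.par c) (b.par d)).symm ≪≫ₗ
        castL dm (Ty.par_arrow_arrow h2).symm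
      else
        (TensorProduct.congr (homEquivL dm a b) (LinearEquiv.refl ℂ _)) ≪≫ₗ
        rTensorHomEquivHomRTensor ℂ ↑(L dm a) ↑(L dm b) ↑(L dm (Ty.arrow c d)) ≪≫ₗ
        LinearEquiv.arrowCongr (LinearEquiv.refl ℂ _) (parEquiv b (Ty.arrow c d)) ≪≫ₗ
        (homEquivL dm a (b.par (Ty.arrow c d))).symm ≪≫ₗ
        castL dm (Ty.par_gt (by omega)).symm

/-- The parallel product of higher-order maps. -/
noncomputable def parMap {x y : Ty Λ} (M : ↑(L dm x)) (N : ↑(L dm y)) : ↑(L dm (x.par y)) :=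
  parEquiv dm x y (M ⊗ₜ[ℂ] N)

/-- The identity map, as an element of `L (z → z)`. -/
noncomputable def idL (z : Ty Λ) : ↑(L dm (Ty.arrow z z)) :=
  ofHom dm (LinearMap.id)

/-- The family of sets of Hermitian / Hs-preserving maps. -/
noncomputable def Hs : (x : Ty Λ) → Set ↑(L dm x)
  | .elem w => {A | (toMat dm A).IsHermitian}
  | .arrow a b => {M | ∀ ρ ∈ Hs a, app dm M ρ ∈ Hs b}

/-- The family of cones of positive semidefinite / completely K-preserving maps. -/
noncomputable def K : (x : Ty Λ) → Set ↑(L dm x)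
  | .elem _ => {A | (toMat dm A).PosSemidef}
  | .arrow a b => {M | ∀ z : Ty Λ, ∀ hz : (Ty.arrow z z).ord = (Ty.arrow a b).ord,
      ∀ ρ ∈ K (a.par z),
        app dm (castL dm (Ty.par_arrow_arrow hz.symm) (parMap dm M (idL dm z))) ρ ∈ K (b.par z)}
  termination_by x => x.ord
  decreasing_by
  all_goals (simp only [Ty.ord_par, Ty.ord] at hz ⊢; omega)

end HigherOrder


open HigherOrder in
/-- The parallel products `ρ ⊛ σ` of maps `ρ : a` and `σ : c` span `L (a ⊛ c)`. -/
theorem span_parMap_eq_top {Λ : Type} (dm : Λ → ℕ) (a c : Ty Λ) :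
    Submodule.span ℂ
      {m : ↑(L dm (a.par c)) | ∃ (ρ : ↑(L dm a)) (σ : ↑(L dm c)), m = parMap dm ρ σ} = ⊤ := by
  have hset : {m : ↑(L dm (a.par c)) | ∃ (ρ : ↑(L dm a)) (σ : ↑(L dm c)), m = parMap dm ρ σ}
      = (parEquiv dm a c : TensorProduct ℂ ↑(L dm a) ↑(L dm c) →ₗ[ℂ] ↑(L dm (a.par c))) ''
        {t | ∃ ρ σ, TensorProduct.tmul ℂ ρ σ = t} := by
    ext m
    constructor
    · rintro ⟨ρ, σ, rfl⟩
      exact ⟨TensorProduct.tmul ℂ ρ σ, ⟨ρ, σ, rfl⟩, rfl⟩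
    · rintro ⟨t, ⟨ρ, σ, rfl⟩, rfl⟩
      exact ⟨ρ, σ, rfl⟩
  rw [hset, ← Submodule.map_span, TensorProduct.span_tmul_eq_top, Submodule.map_top,
    LinearEquiv.range]
end

section
/- Let x = a → b and y = c → d be types with ord(x) = ord(y), and let M : x and N : y. Then there exists a unique complex-linear map P ∈ L(x ⊛ y) = Hom(L(a ⊛ c), L(b ⊛ d)) satisfying P(ρ ⊛ σ) = M(ρ) ⊛ N(σ) for all ρ ∈ L(a) and σ ∈ L(c); i.e. the symmetric case of the parallel product of maps is well defined. -/
open HigherOrder in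
/-- Well-definedness of the symmetric case of the parallel product of maps: given
`M : a → b` and `N : c → d` with `ord (a → b) = ord (c → d)`, there is a unique linear map
`P ∈ L((a → b) ⊛ (c → d)) = Hom(L (a ⊛ c), L (b ⊛ d))` with
`P (ρ ⊛ σ) = M ρ ⊛ N σ` for all `ρ : a`, `σ : c`. -/
theorem symmetric_parallel_product_well_defined {Λ : Type} (dm : Λ → ℕ) (a b c d : Ty Λ)
    (h : (Ty.arrow a b).ord = (Ty.arrow c d).ord)
    (M : ↑(L dm (Ty.arrow a b))) (N : ↑(L dm (Ty.arrow c d))) :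
    ∃! P : ↑(L dm (a.par c)) →ₗ[ℂ] ↑(L dm (b.par d)),
      ∀ (ρ : ↑(L dm a)) (σ : ↑(L dm c)),
        P (parMap dm ρ σ) = parMap dm (app dm M ρ) (app dm N σ) := by
  open scoped TensorProduct in
  refine ⟨(parEquiv dm b d).toLinearMap.comp
      ((TensorProduct.map (toHom dm M) (toHom dm N)).comp
        (parEquiv dm a c).symm.toLinearMap), ?_, ?_⟩
  · intro ρ σ
    simp [parMap, app]
  · intro Q hQ
    have key : Q.comp (parEquiv dm a c).toLinearMap =
        ((parEquiv dm b d).toLinearMap.comp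
          ((TensorProduct.map (toHom dm M) (toHom dm N)).comp
            (parEquiv dm a c).symm.toLinearMap)).comp (parEquiv dm a c).toLinearMap := by
      apply TensorProduct.ext'
      intro ρ σ
      simpa [parMap, app] using hQ ρ σ
    ext x
    have := congrFun (congrArg (fun f => f.toFun) key) ((parEquiv dm a c).symm x)
    simpa using this
end

section
/- For every type x ∈ Ty, K(x) is contained in Hs(x): every completely K-preserving map (respectively, positive semidefinite operator, at elementary types) is Hs-preserving (respectively, Hermitian). -/
namespace HigherOrder

open scoped TensorProduct ComplexOrder

variable {Λ : Type} (dm : Λ → ℕ)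

theorem castL_symm_cancel {x y : Ty Λ} (h1 : y = x) (h2 : x = y) (v : ↑(L dm y)) :
    castL dm h2 ((castL dm h1) v) = v := by cases h2; rfl

theorem toHom_homEquivL_symm {a b : Ty Λ} (F : ↑(L dm a) →ₗ[ℂ] ↑(L dm b)) :
    toHom dm ((homEquivL dm a b).symm F) = F := rfl

theorem homEquivL_apply' {a b : Ty Λ} (M : ↑(L dm (Ty.arrow a b))) :
    homEquivL dm a b M = toHom dm M := rfl

theorem parMap_def {x y : Ty Λ} (M : ↑(L dm x)) (N : ↑(L dm y)) :
    parMap dm M N = parEquiv dm x y (M ⊗ₜ[ℂ] N) := rfl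

theorem toHom_parMap_lt {x c d : Ty Λ} (h : x.ord < (Ty.arrow c d).ord)
    (M : ↑(L dm x)) (N : ↑(L dm (Ty.arrow c d))) (σ : ↑(L dm c)) :
    toHom dm (castL dm (Ty.par_lt h) (parMap dm M N)) σ = parMap dm M (toHom dm N σ) := by
  cases x with
  | elem v =>
    rw [parMap, parEquiv]
    simp only [LinearEquiv.trans_apply, TensorProduct.congr_tmul,
      lTensorHomEquivHomLTensor_apply, castL_symm_cancel, toHom_homEquivL_symm,
      LinearEquiv.arrowCongr_apply, LinearEquiv.refl_apply, LinearEquiv.refl_symm,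
      TensorProduct.lTensorHomToHomLTensor_apply, homEquivL_apply', parMap_def]
  | arrow a b =>
    rw [parMap, parEquiv, dif_pos h]
    simp only [LinearEquiv.trans_apply, TensorProduct.congr_tmul,
      lTensorHomEquivHomLTensor_apply, castL_symm_cancel, toHom_homEquivL_symm,
      LinearEquiv.arrowCongr_apply, LinearEquiv.refl_apply, LinearEquiv.refl_symm,
      TensorProduct.lTensorHomToHomLTensor_apply, homEquivL_apply', parMap_def]

theorem toHom_parMap_gt {a b y : Ty Λ} (h : y.ord < (Ty.arrow a b).ord)
    (M : ↑(L dm (Ty.arrow a b))) (N : ↑(L dm y)) (ρ : ↑(L dm a)) :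
    toHom dm (castL dm (Ty.par_gt h) (parMap dm M N)) ρ = parMap dm (toHom dm M ρ) N := by
  cases y with
  | elem w =>
    rw [parMap, parEquiv]
    simp only [LinearEquiv.trans_apply, TensorProduct.congr_tmul,
      rTensorHomEquivHomRTensor_apply, castL_symm_cancel, toHom_homEquivL_symm,
      LinearEquiv.arrowCongr_apply, LinearEquiv.refl_apply, LinearEquiv.refl_symm,
      TensorProduct.rTensorHomToHomRTensor_apply, homEquivL_apply', parMap_def]
  | arrow c d =>
    rw [parMap, parEquiv, dif_neg (by omega), dif_neg (by omega)]
    simp only [LinearEquiv.trans_apply, TensorProduct.congr_tmul,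
      rTensorHomEquivHomRTensor_apply, castL_symm_cancel, toHom_homEquivL_symm,
      LinearEquiv.arrowCongr_apply, LinearEquiv.refl_apply, LinearEquiv.refl_symm,
      TensorProduct.rTensorHomToHomRTensor_apply, homEquivL_apply', parMap_def]

theorem toHom_parMap_eq {a b c d : Ty Λ} (h : (Ty.arrow a b).ord = (Ty.arrow c d).ord)
    (M : ↑(L dm (Ty.arrow a b))) (N : ↑(L dm (Ty.arrow c d)))
    (ρ : ↑(L dm a)) (σ : ↑(L dm c)) :
    toHom dm (castL dm (Ty.par_arrow_arrow h) (parMap dm M N)) (parMap dm ρ σ) =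
      parMap dm (toHom dm M ρ) (toHom dm N σ) := by
  rw [parMap_def dm M N, parEquiv, dif_neg (by omega), dif_pos h]
  simp only [LinearEquiv.trans_apply, TensorProduct.congr_tmul,
    homTensorHomEquiv_apply, castL_symm_cancel, toHom_homEquivL_symm,
    LinearEquiv.arrowCongr_apply, parMap_def, LinearEquiv.symm_apply_apply,
    TensorProduct.homTensorHomMap_apply, TensorProduct.map_tmul, homEquivL_apply']

end HigherOrder

namespace HigherOrder

variable {Λ : Type} (dm : Λ → ℕ)

section Choi

variable {m n : Type*} [Fintype m] [Fintype n] [DecidableEq m] [DecidableEq n]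

/-- The Choi matrix of a linear map between matrix spaces. -/
noncomputable def choi (f : Matrix m m ℂ →ₗ[ℂ] Matrix n n ℂ) : Matrix (m × n) (m × n) ℂ :=
  Matrix.of fun p q => f (Matrix.single p.1 q.1 1) p.2 q.2

/-- The linear map with a given Choi matrix. -/
noncomputable def unchoi (C : Matrix (m × n) (m × n) ℂ) :
    Matrix m m ℂ →ₗ[ℂ] Matrix n n ℂ where
  toFun X := Matrix.of fun k l => ∑ i, ∑ j, X i j * C (i, k) (j, l)
  map_add' X Y := by ext k l; simp [Matrix.add_apply, add_mul, Finset.sum_add_distrib]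
  map_smul' c X := by ext k l; simp [Finset.mul_sum, mul_assoc]

theorem unchoi_choi (f : Matrix m m ℂ →ₗ[ℂ] Matrix n n ℂ) : unchoi (choi f) = f := by
  apply LinearMap.ext; intro X
  ext k l
  show ∑ i, ∑ j, X i j * choi f (i, k) (j, l) = f X k l
  conv_rhs => rw [Matrix.matrix_eq_sum_single X]
  rw [map_sum, Matrix.sum_apply]
  refine Finset.sum_congr rfl fun i _ => ?_
  rw [map_sum, Matrix.sum_apply]
  refine Finset.sum_congr rfl fun j _ => ?_
  rw [show Matrix.single i j (X i j) = X i j • Matrix.single i j (1 : ℂ) by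
    rw [Matrix.smul_single, smul_eq_mul, mul_one], map_smul]
  simp [choi, smul_eq_mul]

theorem choi_unchoi (C : Matrix (m × n) (m × n) ℂ) : choi (unchoi C) = C := by
  ext ⟨i, k⟩ ⟨j, l⟩
  show ∑ a, ∑ b, Matrix.single i j (1:ℂ) a b * C (a, k) (b, l) = C (i, k) (j, l)
  simp [Matrix.single, ite_and, Finset.sum_ite_eq, Matrix.of_apply]

/-- The Choi linear equivalence. -/
noncomputable def choiEquiv :
    (Matrix m m ℂ →ₗ[ℂ] Matrix n n ℂ) ≃ₗ[ℂ] Matrix (m × n) (m × n) ℂ where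
  toFun := choi
  invFun := unchoi
  map_add' f g := by ext p q; simp [choi]
  map_smul' c f := by ext p q; simp [choi]
  left_inv := unchoi_choi
  right_inv := choi_unchoi

theorem choiEquiv_apply (f : Matrix m m ℂ →ₗ[ℂ] Matrix n n ℂ) (i j : m) (k l : n) :
    choiEquiv f (i, k) (j, l) = f (Matrix.single i j 1) k l := rfl

end Choi

/-- The index type of the matrix space into which `L x` flattens. -/
def ii : Ty Λ → Type
  | .elem w => Fin (dimw dm w)
  | .arrow a b => ii a × ii b

instance instFintypeIi : (x : Ty Λ) → Fintype (ii dm x)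
  | .elem _ => inferInstanceAs (Fintype (Fin _))
  | .arrow a b =>
    letI := instFintypeIi a
    letI := instFintypeIi b
    inferInstanceAs (Fintype (_ × _))

instance instDecEqIi : (x : Ty Λ) → DecidableEq (ii dm x)
  | .elem _ => inferInstanceAs (DecidableEq (Fin _))
  | .arrow a b =>
    letI := instDecEqIi a
    letI := instDecEqIi b
    inferInstanceAs (DecidableEq (_ × _))

/-- The recursive (iterated Choi) flattening of `L x` into a matrix space. -/
noncomputable def Phi : (x : Ty Λ) → (↑(L dm x) ≃ₗ[ℂ] Matrix (ii dm x) (ii dm x) ℂ)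
  | .elem w => matEquivL dm w
  | .arrow a b =>
    homEquivL dm a b ≪≫ₗ LinearEquiv.arrowCongr (Phi a) (Phi b) ≪≫ₗ choiEquiv

@[simp] theorem Phi_elem (w : List Λ) : Phi dm (Ty.elem w) = matEquivL dm w := by
  rw [Phi]

theorem Phi_arrow_apply {a b : Ty Λ} (M : ↑(L dm (Ty.arrow a b))) (i j : ii dm a)
    (k l : ii dm b) :
    Phi dm (Ty.arrow a b) M (i, k) (j, l) =
      Phi dm b (toHom dm M ((Phi dm a).symm (Matrix.single i j 1))) k l := by
  rw [Phi]
  rfl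

/-- prod left commute -/
def sh3 {α β γ : Type} : α × (β × γ) ≃ β × (α × γ) :=
  ⟨fun p => (p.2.1, (p.1, p.2.2)), fun p => (p.2.1, (p.1, p.2.2)), fun _ => rfl, fun _ => rfl⟩

/-- The index identification for the parallel product. -/
def sig : (x y : Ty Λ) → ((ii dm x × ii dm y) ≃ ii dm (x.par y))
  | .elem v, .elem w =>
      (finProdFinEquiv.trans (finCongr (dimw_append dm v w).symm)).trans
        (Equiv.cast (congrArg (ii dm) (Ty.par_elem_elem v w).symm))
  | .elem v, .arrow c d =>
      (sh3.trans ((Equiv.refl (ii dm c)).prodCongr (sig (Ty.elem v) d))).trans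
        (Equiv.cast (congrArg (ii dm) (Ty.par_lt (by simp [Ty.ord])).symm))
  | .arrow a b, .elem w =>
      ((Equiv.prodAssoc _ _ _).trans
          ((Equiv.refl (ii dm a)).prodCongr (sig b (Ty.elem w)))).trans
        (Equiv.cast (congrArg (ii dm) (Ty.par_gt (by simp [Ty.ord])).symm))
  | .arrow a b, .arrow c d =>
      if h : (Ty.arrow a b).ord < (Ty.arrow c d).ord then
        (sh3.trans ((Equiv.refl (ii dm c)).prodCongr (sig (Ty.arrow a b) d))).trans
          (Equiv.cast (congrArg (ii dm) (Ty.par_lt h).symm))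
      else if h2 : (Ty.arrow a b).ord = (Ty.arrow c d).ord then
        ((Equiv.prodProdProdComm _ _ _ _).trans ((sig a c).prodCongr (sig b d))).trans
          (Equiv.cast (congrArg (ii dm) (Ty.par_arrow_arrow h2).symm))
      else
        ((Equiv.prodAssoc _ _ _).trans
            ((Equiv.refl (ii dm a)).prodCongr (sig b (Ty.arrow c d)))).trans
          (Equiv.cast (congrArg (ii dm) (Ty.par_gt (by omega)).symm))

theorem Phi_castL {x y : Ty Λ} (h : x = y) (v : ↑(L dm x)) (p q : ii dm x) :
    Phi dm y (castL dm h v) (Equiv.cast (congrArg (ii dm) h) p)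
      (Equiv.cast (congrArg (ii dm) h) q) = Phi dm x v p q := by
  cases h; rfl

end HigherOrder

namespace HigherOrder

open scoped TensorProduct

variable {Λ : Type} (dm : Λ → ℕ)

theorem stdBasisMatrix_kron {m n : Type*} [Fintype m] [Fintype n] [DecidableEq m]
    [DecidableEq n] (i j : m) (k l : n) :
    Matrix.kroneckerMap (· * ·) (Matrix.single i j (1:ℂ))
        (Matrix.single k l (1:ℂ)) =
      Matrix.single (i,k) (j,l) (1:ℂ) := by
  ext ⟨a, b⟩ ⟨c, d⟩
  simp only [Matrix.kroneckerMap_apply, Matrix.single, Matrix.of_apply,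
    Prod.mk.injEq]
  by_cases h1 : i = a <;> by_cases h2 : j = c <;> by_cases h3 : k = b <;>
    by_cases h4 : l = d <;> simp_all

theorem basisEquiv_tmul (v w : List Λ) (A : Matrix (Fin (dimw dm v)) (Fin (dimw dm v)) ℂ)
    (B : Matrix (Fin (dimw dm w)) (Fin (dimw dm w)) ℂ) :
    (((Matrix.stdBasis ℂ (Fin (dimw dm v)) (Fin (dimw dm v))).tensorProduct
          (Matrix.stdBasis ℂ (Fin (dimw dm w)) (Fin (dimw dm w)))).equiv
        (Matrix.stdBasis ℂ (Fin (dimw dm v) × Fin (dimw dm w))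
          (Fin (dimw dm v) × Fin (dimw dm w)))
        (Equiv.prodProdProdComm _ _ _ _)) (A ⊗ₜ[ℂ] B) =
      Matrix.kroneckerMap (· * ·) A B := by
  have key : (((Matrix.stdBasis ℂ (Fin (dimw dm v)) (Fin (dimw dm v))).tensorProduct
          (Matrix.stdBasis ℂ (Fin (dimw dm w)) (Fin (dimw dm w)))).equiv
        (Matrix.stdBasis ℂ (Fin (dimw dm v) × Fin (dimw dm w))
          (Fin (dimw dm v) × Fin (dimw dm w)))
        (Equiv.prodProdProdComm _ _ _ _)).toLinearMap =
      TensorProduct.lift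
        (Matrix.kroneckerBilinear (R := ℂ) (α := ℂ)) := by
    apply ((Matrix.stdBasis ℂ (Fin (dimw dm v)) (Fin (dimw dm v))).tensorProduct
        (Matrix.stdBasis ℂ (Fin (dimw dm w)) (Fin (dimw dm w)))).ext
    rintro ⟨⟨i, j⟩, ⟨k, l⟩⟩
    simp only [LinearEquiv.coe_coe]
    rw [Module.Basis.equiv_apply, Module.Basis.tensorProduct_apply, TensorProduct.lift.tmul]
    simp only [Equiv.prodProdProdComm_apply]
    rw [Matrix.stdBasis_eq_single, Matrix.stdBasis_eq_single,
      Matrix.stdBasis_eq_single]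
    exact (stdBasisMatrix_kron i j k l).symm
  calc _ = (((Matrix.stdBasis ℂ (Fin (dimw dm v)) (Fin (dimw dm v))).tensorProduct
          (Matrix.stdBasis ℂ (Fin (dimw dm w)) (Fin (dimw dm w)))).equiv
        (Matrix.stdBasis ℂ (Fin (dimw dm v) × Fin (dimw dm w))
          (Fin (dimw dm v) × Fin (dimw dm w)))
        (Equiv.prodProdProdComm _ _ _ _)).toLinearMap (A ⊗ₜ[ℂ] B) := rfl
    _ = TensorProduct.lift
        (Matrix.kroneckerBilinear (R := ℂ) (α := ℂ)) (A ⊗ₜ[ℂ] B) := by rw [key]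
    _ = Matrix.kroneckerMap (· * ·) A B := rfl

theorem Phi_cast' {x y : Ty Λ} (h : x = y) (v : ↑(L dm x)) (p q : ii dm y) :
    Phi dm x v (Equiv.cast (congrArg (ii dm) h.symm) p)
      (Equiv.cast (congrArg (ii dm) h.symm) q) = Phi dm y (castL dm h v) p q := by
  cases h; rfl

end HigherOrder

namespace HigherOrder

open scoped TensorProduct

variable {Λ : Type} (dm : Λ → ℕ)

theorem matEquiv_cancel_entry (w' : List Λ) (X : Matrix (Fin (dimw dm w')) (Fin (dimw dm w')) ℂ)
    (i j : Fin (dimw dm w')) :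
    (matEquivL dm w') ((matEquivL dm w').symm X) i j = X i j := by
  rw [LinearEquiv.apply_symm_apply]

theorem Phi_parMap {x y : Ty Λ} :
    ∀ (M : ↑(L dm x)) (N : ↑(L dm y)) (p q : ii dm x × ii dm y),
      Phi dm (x.par y) (parMap dm M N) (sig dm x y p) (sig dm x y q) =
        Phi dm x M p.1 q.1 * Phi dm y N p.2 q.2 := by
  induction x, y using Ty.par.induct with
  | case1 v w =>
    intro M N ⟨pa, pb⟩ ⟨qa, qb⟩
    rw [sig, parMap_def, parEquiv]
    simp only [Equiv.trans_apply, LinearEquiv.trans_apply, TensorProduct.congr_tmul]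
    refine Eq.trans (Phi_cast' dm (Ty.par_elem_elem v w) _
      ((finCongr (dimw_append dm v w).symm) (finProdFinEquiv (pa, pb)))
      ((finCongr (dimw_append dm v w).symm) (finProdFinEquiv (qa, qb)))) ?_
    rw [castL_symm_cancel, Phi_elem]
    simp only [Matrix.reindexLinearEquiv_apply, Matrix.reindex_apply]
    rw [basisEquiv_tmul]
    refine Eq.trans (matEquiv_cancel_entry dm (v ++ w) _ _ _) ?_
    simp only [Matrix.submatrix_apply, Equiv.symm_apply_apply, Matrix.kroneckerMap_apply,
      Phi_elem]
    rfl
  | case2 v c d ih =>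
    intro M N ⟨α, i, k⟩ ⟨β, j, l⟩
    rw [sig]
    simp only [Equiv.trans_apply, Equiv.prodCongr_apply, Equiv.coe_refl, sh3,
      Equiv.coe_fn_mk, Prod.map_apply, id_eq]
    refine Eq.trans (Phi_cast' dm (Ty.par_lt (show (Ty.elem v).ord < (Ty.arrow c d).ord by
        simp [Ty.ord])) _
        (i, sig dm (Ty.elem v) d (α, k)) (j, sig dm (Ty.elem v) d (β, l))) ?_
    rw [Phi_arrow_apply, toHom_parMap_lt dm (show (Ty.elem v).ord < (Ty.arrow c d).ord by
      simp only [Ty.ord]; omega), ih, Phi_arrow_apply]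
  | case3 a b w ih =>
    intro M N ⟨⟨i, k⟩, β⟩ ⟨⟨j, l⟩, γ⟩
    rw [sig]
    simp only [Equiv.trans_apply, Equiv.prodCongr_apply, Equiv.coe_refl,
      Equiv.prodAssoc_apply, Prod.map_apply, id_eq]
    refine Eq.trans (Phi_cast' dm (Ty.par_gt (show (Ty.elem w).ord < (Ty.arrow a b).ord by
        simp [Ty.ord])) _
        (i, sig dm b (Ty.elem w) (k, β)) (j, sig dm b (Ty.elem w) (l, γ))) ?_
    rw [Phi_arrow_apply, toHom_parMap_gt dm (show (Ty.elem w).ord < (Ty.arrow a b).ord by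
      simp only [Ty.ord]; omega), ih, Phi_arrow_apply]
  | case4 a b c d h ih =>
    intro M N ⟨⟨i, k⟩, ⟨α, γ⟩⟩ ⟨⟨j, l⟩, ⟨β, δ⟩⟩
    have hs : sig dm (Ty.arrow a b) (Ty.arrow c d) = ((sh3.trans ((Equiv.refl (ii dm c)).prodCongr (sig dm (Ty.arrow a b) d))).trans
            (Equiv.cast (congrArg (ii dm) (Ty.par_lt h).symm))) := by rw [sig]; exact dif_pos h
    rw [hs]
    simp only [Equiv.trans_apply, Equiv.prodCongr_apply, Equiv.coe_refl, sh3,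
      Equiv.coe_fn_mk, Prod.map_apply, id_eq]
    refine Eq.trans (Phi_cast' dm (Ty.par_lt h) _
        (α, sig dm (Ty.arrow a b) d ((i, k), γ))
        (β, sig dm (Ty.arrow a b) d ((j, l), δ))) ?_
    rw [Phi_arrow_apply, toHom_parMap_lt dm h, ih, Phi_arrow_apply dm N α β γ δ]
  | case5 a b c d h1 h2 ih1 ih2 =>
    intro M N ⟨⟨i, k⟩, ⟨α, γ⟩⟩ ⟨⟨j, l⟩, ⟨β, δ⟩⟩
    have hs : sig dm (Ty.arrow a b) (Ty.arrow c d) = ((Equiv.prodProdProdComm _ _ _ _).trans ((sig dm a c).prodCongr (sig dm b d))).trans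
            (Equiv.cast (congrArg (ii dm) (Ty.par_arrow_arrow h2).symm)) := by
      rw [sig]; exact (dif_neg h1).trans (dif_pos h2)
    rw [hs]
    simp only [Equiv.trans_apply, Equiv.prodCongr_apply, Equiv.prodProdProdComm_apply,
      Prod.map_apply]
    refine Eq.trans (Phi_cast' dm (Ty.par_arrow_arrow h2) _
        (sig dm a c (i, α), sig dm b d (k, γ))
        (sig dm a c (j, β), sig dm b d (l, δ))) ?_
    rw [Phi_arrow_apply]
    have hbasis : (Phi dm (a.par c)).symm
        (Matrix.single (sig dm a c (i, α)) (sig dm a c (j, β)) 1) =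
        parMap dm ((Phi dm a).symm (Matrix.single i j 1))
          ((Phi dm c).symm (Matrix.single α β 1)) := by
      apply_fun (Phi dm (a.par c)) using (Phi dm (a.par c)).injective
      rw [LinearEquiv.apply_symm_apply]
      ext p' q'
      obtain ⟨⟨pa, pc⟩, rfl⟩ := (sig dm a c).surjective p'
      obtain ⟨⟨qa, qc⟩, rfl⟩ := (sig dm a c).surjective q'
      rw [ih1]
      simp only [LinearEquiv.apply_symm_apply, Matrix.single, Matrix.of_apply,
        EmbeddingLike.apply_eq_iff_eq, Prod.ext_iff, Prod.mk.injEq]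
      by_cases e1 : i = pa <;> by_cases e2 : j = qa <;> by_cases e3 : α = pc <;>
        by_cases e4 : β = qc <;> simp_all
    rw [hbasis, toHom_parMap_eq dm h2, ih2, Phi_arrow_apply, Phi_arrow_apply]
  | case6 a b c d h1 h2 ih =>
    intro M N ⟨⟨i, k⟩, ⟨α, γ⟩⟩ ⟨⟨j, l⟩, ⟨β, δ⟩⟩
    have hs : sig dm (Ty.arrow a b) (Ty.arrow c d) = ((Equiv.prodAssoc _ _ _).trans
              ((Equiv.refl (ii dm a)).prodCongr (sig dm b (Ty.arrow c d)))).trans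
            (Equiv.cast (congrArg (ii dm) (Ty.par_gt (by omega)).symm)) := by
      rw [sig]; exact (dif_neg h1).trans (dif_neg h2)
    rw [hs]
    simp only [Equiv.trans_apply, Equiv.prodCongr_apply, Equiv.coe_refl,
      Equiv.prodAssoc_apply, Prod.map_apply, id_eq]
    refine Eq.trans (Phi_cast' dm (Ty.par_gt (show (Ty.arrow c d).ord < (Ty.arrow a b).ord
        by omega)) _
        (i, sig dm b (Ty.arrow c d) (k, (α, γ))) (j, sig dm b (Ty.arrow c d) (l, (β, δ)))) ?_
    rw [Phi_arrow_apply, toHom_parMap_gt dm (show (Ty.arrow c d).ord < (Ty.arrow a b).ord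
      by omega), ih, Phi_arrow_apply dm M i j k l]

end HigherOrder

namespace HigherOrder

open scoped TensorProduct ComplexOrder
open Matrix

variable {Λ : Type} (dm : Λ → ℕ)

theorem sum_swap4 {α β γ δ : Type*} [Fintype α] [Fintype β] [Fintype γ] [Fintype δ]
    (f : α → β → γ → δ → ℂ) :
    ∑ a, ∑ b, ∑ c, ∑ d, f a b c d = ∑ c, ∑ d, ∑ a, ∑ b, f a b c d :=
  calc ∑ a, ∑ b, ∑ c, ∑ d, f a b c d
      = ∑ a, ∑ c, ∑ b, ∑ d, f a b c d :=
        Finset.sum_congr rfl (fun _ _ => Finset.sum_comm)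
    _ = ∑ c, ∑ a, ∑ b, ∑ d, f a b c d := Finset.sum_comm
    _ = ∑ c, ∑ a, ∑ d, ∑ b, f a b c d :=
        Finset.sum_congr rfl (fun _ _ => Finset.sum_congr rfl (fun _ _ => Finset.sum_comm))
    _ = ∑ c, ∑ d, ∑ a, ∑ b, f a b c d :=
        Finset.sum_congr rfl (fun _ _ => Finset.sum_comm)

/-- The link product of two positive semidefinite matrices is positive semidefinite. -/
theorem link_posSemidef {m n p : Type*} [Fintype m] [Fintype n] [Fintype p]
    [DecidableEq m] [DecidableEq n] [DecidableEq p]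
    (A : Matrix (m × n) (m × n) ℂ) (R : Matrix (m × p) (m × p) ℂ)
    (hA : A.PosSemidef) (hR : R.PosSemidef) :
    (Matrix.of fun (pq rs : n × p) =>
      ∑ i, ∑ j, A (i, pq.1) (j, rs.1) * R (i, pq.2) (j, rs.2)).PosSemidef := by
  obtain ⟨B, hB⟩ : ∃ B, A = star B * B := by
    open scoped MatrixOrder in exact CStarAlgebra.nonneg_iff_eq_star_mul_self.mp hA.nonneg
  obtain ⟨C, hC⟩ : ∃ C, R = star C * C := by
    open scoped MatrixOrder in exact CStarAlgebra.nonneg_iff_eq_star_mul_self.mp hR.nonneg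
  have key : (Matrix.of fun (pq rs : n × p) =>
      ∑ i, ∑ j, A (i, pq.1) (j, rs.1) * R (i, pq.2) (j, rs.2)) =
      ((Matrix.of fun (st : (m × n) × (m × p)) (ku : n × p) =>
        ∑ i, B st.1 (i, ku.1) * C st.2 (i, ku.2))ᴴ :
          Matrix (n × p) ((m × n) × (m × p)) ℂ) *
      (Matrix.of fun (st : (m × n) × (m × p)) (ku : n × p) =>
        ∑ i, B st.1 (i, ku.1) * C st.2 (i, ku.2)) := by
    ext ⟨k, u⟩ ⟨l, v⟩
    rw [hB, hC]
    simp only [Matrix.mul_apply, Matrix.conjTranspose_apply, Matrix.of_apply,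
      star_sum, star_mul', star_star]
    conv_rhs => rw [Fintype.sum_prod_type]
    calc ∑ i, ∑ j, (∑ s, star (B s (i, k)) * B s (j, l)) *
            (∑ t, star (C t (i, u)) * C t (j, v))
        = ∑ i, ∑ j, ∑ s, ∑ t, (star (B s (i, k)) * B s (j, l)) *
            (star (C t (i, u)) * C t (j, v)) :=
          Finset.sum_congr rfl fun i _ => Finset.sum_congr rfl fun j _ =>
            Finset.sum_mul_sum _ _ _ _
      _ = ∑ s, ∑ t, ∑ i, ∑ j, (star (B s (i, k)) * B s (j, l)) *
            (star (C t (i, u)) * C t (j, v)) := sum_swap4 _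
      _ = ∑ s, ∑ t, (∑ i, star (B s (i, k)) * star (C t (i, u))) *
            (∑ j, B s (j, l) * C t (j, v)) := by
          refine Finset.sum_congr rfl fun s _ => Finset.sum_congr rfl fun t _ => ?_
          rw [Finset.sum_mul_sum]
          refine Finset.sum_congr rfl fun i _ => Finset.sum_congr rfl fun j _ => ?_
          ring
  rw [key]
  exact Matrix.posSemidef_conjTranspose_mul_self _

/-- rank-one outer products are PSD -/
theorem outer_posSemidef {n : Type*} [Fintype n] [DecidableEq n] (ψ : n → ℂ) :
    (Matrix.of fun p q => ψ p * star (ψ q)).PosSemidef := by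
  refine Matrix.PosSemidef.of_dotProduct_mulVec_nonneg ?_ ?_
  · ext p q
    simp [Matrix.conjTranspose_apply, mul_comm]
  · intro x
    have hz : dotProduct (star x) ((Matrix.of fun p q => ψ p * star (ψ q)) *ᵥ x)
        = star (∑ p, star (ψ p) * x p) * (∑ p, star (ψ p) * x p) := by
      simp only [dotProduct, Matrix.mulVec, Pi.star_apply, Matrix.of_apply,
        star_sum, star_mul', star_star]
      rw [Finset.sum_mul_sum]
      refine Finset.sum_congr rfl fun p _ => ?_
      rw [Finset.mul_sum]
      refine Finset.sum_congr rfl fun q _ => ?_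
      ring
    rw [hz]
    exact star_mul_self_nonneg _

theorem apply_eq_sum_choi {m n : Type*} [Fintype m] [Fintype n] [DecidableEq m]
    [DecidableEq n] (f : Matrix m m ℂ →ₗ[ℂ] Matrix n n ℂ) (X : Matrix m m ℂ) (k l : n) :
    f X k l = ∑ i, ∑ j, X i j * choi f (i, k) (j, l) := by
  conv_lhs => rw [← unchoi_choi f]
  rfl

theorem Phi_toHom_apply {a b : Ty Λ} (M : ↑(L dm (Ty.arrow a b))) (ρ : ↑(L dm a))
    (k l : ii dm b) :
    Phi dm b (toHom dm M ρ) k l =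
      ∑ i, ∑ j, Phi dm a ρ i j * Phi dm (Ty.arrow a b) M (i, k) (j, l) := by
  have h1 : Phi dm b (toHom dm M ρ) =
      (LinearEquiv.arrowCongr (Phi dm a) (Phi dm b)) (toHom dm M) (Phi dm a ρ) := by
    rw [LinearEquiv.arrowCongr_apply, LinearEquiv.symm_apply_apply]
  rw [h1, apply_eq_sum_choi]
  rfl

theorem Phi_app_par_id {a b z : Ty Λ} (hz : (Ty.arrow z z).ord = (Ty.arrow a b).ord)
    (M : ↑(L dm (Ty.arrow a b))) (ρ : ↑(L dm (a.par z))) (p q : ii dm b × ii dm z) :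
    Phi dm (b.par z)
        (app dm (castL dm (Ty.par_arrow_arrow hz.symm) (parMap dm M (idL dm z))) ρ)
        (sig dm b z p) (sig dm b z q) =
      ∑ i, ∑ j, Phi dm (Ty.arrow a b) M (i, p.1) (j, q.1) *
        Phi dm (a.par z) ρ (sig dm a z (i, p.2)) (sig dm a z (j, q.2)) := by
  obtain ⟨t, rfl⟩ : ∃ t, ρ = parEquiv dm a z t :=
    ⟨(parEquiv dm a z).symm ρ, (LinearEquiv.apply_symm_apply _ _).symm⟩
  induction t using TensorProduct.induction_on with
  | zero =>
    simp only [map_zero, app, LinearMap.map_zero, Matrix.zero_apply, mul_zero,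
      Finset.sum_const_zero]
  | tmul u w =>
    rw [show (parEquiv dm a z) (u ⊗ₜ[ℂ] w) = parMap dm u w from rfl, app,
      toHom_parMap_eq dm hz.symm M (idL dm z) u w, Phi_parMap]
    have hid : toHom dm (idL dm z) w = w := rfl
    rw [hid, Phi_toHom_apply]
    rw [Finset.sum_mul]
    refine Finset.sum_congr rfl fun i _ => ?_
    rw [Finset.sum_mul]
    refine Finset.sum_congr rfl fun j _ => ?_
    rw [Phi_parMap]
    ring
  | add t1 t2 h1 h2 =>
    simp only [map_add, app, LinearMap.map_add, Matrix.add_apply] at h1 h2 ⊢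
    rw [h1, h2, ← Finset.sum_add_distrib]
    refine Finset.sum_congr rfl fun i _ => ?_
    rw [← Finset.sum_add_distrib]
    refine Finset.sum_congr rfl fun j _ => ?_
    ring

end HigherOrder

namespace HigherOrder

open scoped ComplexOrder
open Matrix

variable {Λ : Type} (dm : Λ → ℕ)

theorem stdBasisMatrix_conjT {m n : Type*} [DecidableEq m] [DecidableEq n] (i : m) (j : n) :
    (Matrix.single i j (1:ℂ))ᴴ = Matrix.single j i 1 := by
  ext a b
  simp only [Matrix.conjTranspose_apply, Matrix.single, Matrix.of_apply,
    apply_ite star, star_one, star_zero]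
  exact if_congr and_comm rfl rfl

theorem hermPreserving_iff {m n : Type*} [Fintype m] [Fintype n] [DecidableEq m]
    [DecidableEq n] (f : Matrix m m ℂ →ₗ[ℂ] Matrix n n ℂ) :
    (∀ X : Matrix m m ℂ, X.IsHermitian → (f X).IsHermitian) ↔ (choi f).IsHermitian := by
  constructor
  · intro hf
    have hstar : ∀ X : Matrix m m ℂ, f Xᴴ = (f X)ᴴ := by
      intro X
      set S : Matrix m m ℂ := X + Xᴴ with hS
      set T : Matrix m m ℂ := Complex.I • X + (Complex.I • X)ᴴ with hT
      have hSh : S.IsHermitian := by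
        rw [Matrix.IsHermitian, hS, Matrix.conjTranspose_add, Matrix.conjTranspose_conjTranspose,
          add_comm]
      have hTh : T.IsHermitian := by
        rw [Matrix.IsHermitian, hT, Matrix.conjTranspose_add, Matrix.conjTranspose_conjTranspose,
          add_comm]
      have h2X : (2:ℂ) • Xᴴ = S + Complex.I • T := by
        ext a b
        simp only [hS, hT, Matrix.add_apply, Matrix.smul_apply, Matrix.conjTranspose_apply,
          smul_eq_mul, star_mul', Complex.star_def, Complex.conj_I, star_star]
        ring_nf
        linear_combination (starRingEnd ℂ (X b a) - X a b) * Complex.I_mul_I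
      have h2X' : (2:ℂ) • X = S - Complex.I • T := by
        ext a b
        simp only [hS, hT, Matrix.add_apply, Matrix.sub_apply, Matrix.smul_apply,
          Matrix.conjTranspose_apply, smul_eq_mul, star_mul', Complex.star_def,
          Complex.conj_I, star_star]
        ring_nf
        linear_combination (X a b - starRingEnd ℂ (X b a)) * Complex.I_mul_I
      have key : (2:ℂ) • f Xᴴ = (2:ℂ) • (f X)ᴴ := by
        calc (2:ℂ) • f Xᴴ = f ((2:ℂ) • Xᴴ) := (_root_.map_smul f _ _).symm
          _ = f S + Complex.I • f T := by rw [h2X, map_add, _root_.map_smul]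
          _ = (f S)ᴴ + Complex.I • (f T)ᴴ := by rw [hf S hSh, hf T hTh]
          _ = (f S - Complex.I • f T)ᴴ := by
              rw [Matrix.conjTranspose_sub, Matrix.conjTranspose_smul, Complex.star_def,
                Complex.conj_I, neg_smul, sub_neg_eq_add]
          _ = (f ((2:ℂ) • X))ᴴ := by rw [h2X', map_sub, _root_.map_smul]
          _ = (2:ℂ) • (f X)ᴴ := by rw [_root_.map_smul, Matrix.conjTranspose_smul, Complex.star_def,
              map_ofNat]
      have h2 : (2:ℂ) ≠ 0 := two_ne_zero
      exact smul_right_injective _ h2 key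
    ext ⟨i, k⟩ ⟨j, l⟩
    show star (choi f (j, l) (i, k)) = choi f (i, k) (j, l)
    show star (f (Matrix.single j i 1) l k) = f (Matrix.single i j 1) k l
    rw [show Matrix.single j i (1:ℂ) = (Matrix.single i j (1:ℂ))ᴴ from
      (stdBasisMatrix_conjT i j).symm, hstar]
    simp [Matrix.conjTranspose_apply]
  · intro hC X hX
    ext k l
    show star (f X l k) = f X k l
    rw [apply_eq_sum_choi f X l k, apply_eq_sum_choi f X k l, star_sum]
    rw [Finset.sum_comm]
    refine Finset.sum_congr rfl fun i _ => ?_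
    rw [star_sum]
    refine Finset.sum_congr rfl fun j _ => ?_
    rw [star_mul', hX.apply, hC.apply]

theorem Hs_iff : ∀ {x : Ty Λ} (M : ↑(L dm x)),
    M ∈ Hs dm x ↔ (Phi dm x M).IsHermitian := by
  intro x
  induction x with
  | elem w =>
    intro M
    rw [Hs]
    exact Iff.rfl
  | arrow a b iha ihb =>
    intro M
    rw [Hs]
    have key : (∀ ρ ∈ Hs dm a, app dm M ρ ∈ Hs dm b) ↔
        (∀ X : Matrix (ii dm a) (ii dm a) ℂ, X.IsHermitian →
          ((LinearEquiv.arrowCongr (Phi dm a) (Phi dm b)) (toHom dm M) X).IsHermitian) := by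
      constructor
      · intro h X hX
        rw [LinearEquiv.arrowCongr_apply]
        refine (ihb _).mp (h ((Phi dm a).symm X) ?_)
        rw [iha, LinearEquiv.apply_symm_apply]
        exact hX
      · intro h ρ hρ
        rw [ihb]
        have := h (Phi dm a ρ) ((iha ρ).mp hρ)
        rw [LinearEquiv.arrowCongr_apply, LinearEquiv.symm_apply_apply] at this
        exact this
    refine Iff.trans ?_ (Iff.trans (key.trans (hermPreserving_iff _)) Iff.rfl)
    exact Iff.rfl

end HigherOrder

namespace HigherOrder

open scoped ComplexOrder
open Matrix

variable {Λ : Type} (dm : Λ → ℕ)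

/-- tower of trivial (one-dimensional) types -/
def zc : ℕ → Ty Λ
  | 0 => Ty.elem []
  | k + 1 => Ty.arrow (zc k) (zc k)

theorem ord_zc : ∀ k : ℕ, (zc k : Ty Λ).ord = k
  | 0 => rfl
  | k + 1 => by rw [zc, Ty.ord, ord_zc k]; omega

def uniqueZc : ∀ k : ℕ, Unique (ii dm (zc (Λ := Λ) k))
  | 0 => inferInstanceAs (Unique (Fin 1))
  | k + 1 =>
    letI := uniqueZc k
    { default := (default, default),
      uniq := fun p => by apply Prod.ext <;> exact Subsingleton.elim _ _ }

theorem K_iff_aux : ∀ (n : ℕ) (x : Ty Λ), x.ord = n → ∀ (M : ↑(L dm x)),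
    M ∈ K dm x ↔ (Phi dm x M).PosSemidef := by
  intro n
  induction n using Nat.strong_induction_on with
  | _ n IH =>
    intro x hx M
    cases x with
    | elem w =>
      rw [K]
      exact Iff.rfl
    | arrow a b =>
      rw [K]
      simp only [Set.mem_setOf_eq]
      constructor
      · -- completely K-preserving implies PSD Choi
        intro hK
        set m := max a.ord b.ord with hm
        haveI : Unique (ii dm (zc (Λ := Λ) m)) := uniqueZc dm m
        set z : Ty Λ := a.par (zc m) with hzdef
        have hz : (Ty.arrow z z).ord = (Ty.arrow a b).ord := by
          simp only [Ty.ord, Ty.ord_par, hzdef, ord_zc]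
          omega
        have hlt1 : (a.par z).ord < n := by
          simp only [Ty.ord, Ty.ord_par, hzdef, ord_zc] at hx ⊢
          omega
        have hlt2 : (b.par z).ord < n := by
          simp only [Ty.ord, Ty.ord_par, hzdef, ord_zc] at hx ⊢
          omega
        set π : ii dm z → ii dm a := fun u => ((sig dm a (zc m)).symm u).1 with hπ
        set s : ii dm a → ii dm z := fun i => sig dm a (zc m) (i, default) with hs
        have hπs : ∀ i, π (s i) = i := by
          intro i
          rw [hπ, hs]
          simp
        set ψ : ii dm a × ii dm z → ℂ := fun p => if p.1 = π p.2 then 1 else 0 with hψ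
        set E : ↑(L dm (a.par z)) := (Phi dm (a.par z)).symm
          ((Matrix.of fun p q : ii dm a × ii dm z => ψ p * star (ψ q)).submatrix
            ((sig dm a z).symm) ((sig dm a z).symm)) with hE
        have hEK : E ∈ K dm (a.par z) := by
          rw [IH _ hlt1 _ rfl, hE, LinearEquiv.apply_symm_apply]
          exact (outer_posSemidef ψ).submatrix _
        have hX : (Phi dm (b.par z)
            (app dm (castL dm (Ty.par_arrow_arrow hz.symm) (parMap dm M (idL dm z)))
              E)).PosSemidef :=
          (IH _ hlt2 _ rfl _).mp (hK z hz E hEK)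
        set X := Phi dm (b.par z)
            (app dm (castL dm (Ty.par_arrow_arrow hz.symm) (parMap dm M (idL dm z))) E)
          with hXdef
        set g : ii dm a × ii dm b → ii dm (b.par z) :=
          fun p => sig dm b z (p.2, s p.1) with hg
        have key : Phi dm (Ty.arrow a b) M = X.submatrix g g := by
          ext ⟨i, k⟩ ⟨j, l⟩
          rw [Matrix.submatrix_apply, hXdef, hg]
          show Phi dm (Ty.arrow a b) M (i, k) (j, l) = Phi dm (b.par z) _
            (sig dm b z (k, s i)) (sig dm b z (l, s j))
          rw [Phi_app_par_id dm hz M E (k, s i) (l, s j), hE]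
          have hmatE : Phi dm (a.par z) ((Phi dm (a.par z)).symm
              ((Matrix.of fun p q : ii dm a × ii dm z => ψ p * star (ψ q)).submatrix
                ((sig dm a z).symm) ((sig dm a z).symm))) =
              ((Matrix.of fun p q : ii dm a × ii dm z => ψ p * star (ψ q)).submatrix
                ((sig dm a z).symm) ((sig dm a z).symm)) :=
            LinearEquiv.apply_symm_apply _ _
          rw [hmatE]
          simp only [Matrix.submatrix_apply, Equiv.symm_apply_apply, Matrix.of_apply, hψ,
            hπs, apply_ite star, star_one, star_zero]
          simp [ite_mul, mul_ite, mul_one, mul_zero, Finset.sum_ite_eq']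
        rw [key]
        exact hX.submatrix g
      · -- PSD Choi implies completely K-preserving
        intro hPSD z hz ρ hρ
        have hlt1 : (a.par z).ord < n := by
          simp only [Ty.ord, Ty.ord_par] at hx hz ⊢
          omega
        have hlt2 : (b.par z).ord < n := by
          simp only [Ty.ord, Ty.ord_par] at hx hz ⊢
          omega
        rw [IH _ hlt2 _ rfl]
        have hR : (Phi dm (a.par z) ρ).PosSemidef := (IH _ hlt1 _ rfl ρ).mp hρ
        have key : Phi dm (b.par z)
            (app dm (castL dm (Ty.par_arrow_arrow hz.symm) (parMap dm M (idL dm z))) ρ) =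
            (Matrix.of fun (p q : ii dm b × ii dm z) =>
              ∑ i, ∑ j, Phi dm (Ty.arrow a b) M (i, p.1) (j, q.1) *
                (Phi dm (a.par z) ρ).submatrix (sig dm a z) (sig dm a z)
                  ((i, p.2)) ((j, q.2))).submatrix
              ((sig dm b z).symm) ((sig dm b z).symm) := by
          ext p' q'
          obtain ⟨p, rfl⟩ := (sig dm b z).surjective p'
          obtain ⟨q, rfl⟩ := (sig dm b z).surjective q'
          rw [Matrix.submatrix_apply]
          simp only [Equiv.symm_apply_apply, Matrix.of_apply]
          exact Phi_app_par_id dm hz M ρ p q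
        rw [key]
        exact (link_posSemidef _ _ hPSD (hR.submatrix _)).submatrix _

theorem K_iff {x : Ty Λ} (M : ↑(L dm x)) :
    M ∈ K dm x ↔ (Phi dm x M).PosSemidef :=
  K_iff_aux dm x.ord x rfl M

end HigherOrder


open HigherOrder in
/-- For every type `x`, `K x` is contained in `Hs x`. -/
theorem K_subset_Hs {Λ : Type} (dm : Λ → ℕ) (x : Ty Λ) :
    K dm x ⊆ Hs dm x := by
  intro M hM
  exact (Hs_iff dm M).mpr ((K_iff dm M).mp hM).1
end

section
/- Let A and B be elementary types, and suppose the alphabet Λ contains a label C with dim H_C ≥ 2. Then K(A → B) coincides with the set of completely positive maps from End(H_A) to End(H_B) in the standard sense: a linear map M : End(H_A) → End(H_B) belongs to K(A → B) if and only if, for every finite-dimensional complex Hilbert space W and every positive semidefinite operator ρ on H_A ⊗ W, the operator (M ⊗ id_{End(W)})(ρ) on H_B ⊗ W is positive semidefinite. -/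
namespace HigherOrder

open scoped TensorProduct ComplexOrder
open Matrix Kronecker

variable {Λ : Type} (dm : Λ → ℕ)

theorem castL_castL {x y z : Ty Λ} (h : x = y) (h' : y = z) (v : ↑(L dm x)) :
    castL dm h' (castL dm h v) = castL dm (h.trans h') v := by subst h h'; rfl

theorem castL_rfl {x : Ty Λ} (h : x = x) (v : ↑(L dm x)) : castL dm h v = v := rfl

theorem mem_K_elem_iff {w : List Λ} (ρ : ↑(L dm (Ty.elem w))) :
    ρ ∈ K dm (Ty.elem w) ↔ (toMat dm ρ).PosSemidef := by rw [K]; rfl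

theorem mem_K_of_eq_elem {x : Ty Λ} {w : List Λ} (h : x = Ty.elem w) (ρ : ↑(L dm x)) :
    ρ ∈ K dm x ↔ (toMat dm (castL dm h ρ)).PosSemidef := by
  subst h; rw [castL_rfl]; exact mem_K_elem_iff dm ρ

theorem mem_K_arrow_iff {a b : Ty Λ} (M : ↑(L dm (Ty.arrow a b))) :
    M ∈ K dm (Ty.arrow a b) ↔ ∀ z : Ty Λ, ∀ hz : (Ty.arrow z z).ord = (Ty.arrow a b).ord,
      ∀ ρ ∈ K dm (a.par z),
        app dm (castL dm (Ty.par_arrow_arrow hz.symm) (parMap dm M (idL dm z))) ρ ∈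
          K dm (b.par z) := by
  rw [K]; rfl

theorem app_parMap_id {a b z : Ty Λ} (hz : (Ty.arrow z z).ord = (Ty.arrow a b).ord)
    (M : ↑(L dm (Ty.arrow a b))) (ρ : ↑(L dm (a.par z))) :
    app dm (castL dm (Ty.par_arrow_arrow hz.symm) (parMap dm M (idL dm z))) ρ =
      parEquiv dm b z (LinearMap.rTensor ↑(L dm z) (toHom dm M) ((parEquiv dm a z).symm ρ)) := by
  rw [parMap, parEquiv]
  rw [dif_neg (by omega), dif_pos hz.symm]
  simp only [LinearEquiv.trans_apply, TensorProduct.congr_tmul, castL_castL, castL_rfl,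
    homTensorHomEquiv_apply, LinearEquiv.arrowCongr_apply]
  simp only [TensorProduct.homTensorHomMap_apply, LinearEquiv.arrowCongr_apply]
  rfl

end HigherOrder
namespace HigherOrder

open scoped TensorProduct ComplexOrder
open Matrix Kronecker

variable {Λ : Type} (dm : Λ → ℕ)

/-- The index identification `Fin (dimw v) × Fin (dimw w) ≃ Fin (dimw (v ++ w))`. -/
def fpe (v w : List Λ) : Fin (dimw dm v) × Fin (dimw dm w) ≃ Fin (dimw dm (v ++ w)) :=
  finProdFinEquiv.trans (finCongr (dimw_append dm v w).symm)

set_option synthInstance.maxHeartbeats 1000000 in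
theorem basis_equiv_tmul (m n : ℕ) (P : Matrix (Fin m) (Fin m) ℂ) (Q : Matrix (Fin n) (Fin n) ℂ) :
    ((Matrix.stdBasis ℂ (Fin m) (Fin m)).tensorProduct (Matrix.stdBasis ℂ (Fin n) (Fin n))).equiv
      (Matrix.stdBasis ℂ (Fin m × Fin n) (Fin m × Fin n)) (Equiv.prodProdProdComm _ _ _ _)
      (P ⊗ₜ[ℂ] Q) = P ⊗ₖ Q := by
  conv_lhs => rw [Matrix.matrix_eq_sum_single P, Matrix.matrix_eq_sum_single Q]
  simp only [TensorProduct.sum_tmul, TensorProduct.tmul_sum, map_sum]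
  have h1 : ∀ (i j : Fin m) (k l : Fin n),
      ((Matrix.stdBasis ℂ (Fin m) (Fin m)).tensorProduct
          (Matrix.stdBasis ℂ (Fin n) (Fin n))).equiv
        (Matrix.stdBasis ℂ (Fin m × Fin n) (Fin m × Fin n)) (Equiv.prodProdProdComm _ _ _ _)
        (Matrix.single i j (P i j) ⊗ₜ[ℂ] Matrix.single k l (Q k l)) =
      (P i j * Q k l) • Matrix.single (i, k) (j, l) (1 : ℂ) := by
    intro i j k l
    rw [show Matrix.single i j (P i j) = P i j • Matrix.single i j (1 : ℂ) by
        rw [Matrix.smul_single, smul_eq_mul, mul_one],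
      show Matrix.single k l (Q k l) = Q k l • Matrix.single k l (1 : ℂ) by
        rw [Matrix.smul_single, smul_eq_mul, mul_one]]
    rw [← TensorProduct.smul_tmul', TensorProduct.tmul_smul, _root_.map_smul, _root_.map_smul,
      ← Matrix.stdBasis_eq_single, ← Matrix.stdBasis_eq_single,
      ← Module.Basis.tensorProduct_apply, Module.Basis.equiv_apply, Matrix.stdBasis_eq_single]
    rw [smul_smul, mul_comm]
    rfl
  simp only [h1]
  ext ⟨p, r⟩ ⟨q, s⟩
  simp only [Finset.sum_apply, Matrix.sum_apply, Matrix.smul_apply, Matrix.single,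
    Matrix.of_apply, Prod.mk.injEq, smul_eq_mul, mul_ite, mul_one, mul_zero,
    Matrix.kroneckerMap_apply]
  rw [Finset.sum_eq_single r]
  · rw [Finset.sum_eq_single s]
    · rw [Finset.sum_eq_single p]
      · rw [Finset.sum_eq_single q]
        · simp
        · intro b _ hb; simp [hb]
        · simp
      · intro b _ hb; simp [hb]
      · simp
    · intro b _ hb; simp [hb]
    · simp
  · intro b _ hb; simp [hb]
  · simp

end HigherOrder
namespace HigherOrder

open scoped TensorProduct ComplexOrder
open Matrix Kronecker

variable {Λ : Type} (dm : Λ → ℕ)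

theorem parEquiv_elem_tmul (v w : List Λ) (P : ↑(L dm (Ty.elem v))) (Q : ↑(L dm (Ty.elem w))) :
    toMat dm (castL dm (Ty.par_elem_elem v w) (parEquiv dm (Ty.elem v) (Ty.elem w) (P ⊗ₜ[ℂ] Q)))
      = (toMat dm P ⊗ₖ toMat dm Q).submatrix (fpe dm v w).symm (fpe dm v w).symm := by
  rw [parEquiv]
  simp only [LinearEquiv.trans_apply, TensorProduct.congr_tmul, castL_castL, castL_rfl]
  rw [show (matEquivL dm v) P = toMat dm P from rfl, show (matEquivL dm w) Q = toMat dm Q from rfl,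
    basis_equiv_tmul]
  simp only [Matrix.reindexLinearEquiv_apply, Matrix.reindex_apply, Matrix.submatrix_submatrix]
  ext p q
  simp [fpe, Equiv.symm_trans_apply]
  rfl

end HigherOrder
namespace HigherOrder

open scoped TensorProduct ComplexOrder
open Matrix Kronecker

variable {Λ : Type} (dm : Λ → ℕ)

/-- The action of `f ⊗ id` on matrices over a product index, defined slice-wise. -/
def sliceMap {da db : ℕ} (f : Matrix (Fin da) (Fin da) ℂ →ₗ[ℂ] Matrix (Fin db) (Fin db) ℂ)
    (k : ℕ) :
    Matrix (Fin da × Fin k) (Fin da × Fin k) ℂ →ₗ[ℂ] Matrix (Fin db × Fin k) (Fin db × Fin k) ℂ where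
  toFun ρ := Matrix.of fun p q => f (Matrix.of fun s t => ρ (s, p.2) (t, q.2)) p.1 q.1
  map_add' ρ σ := by
    ext p q
    show f (Matrix.of fun s t => (ρ + σ) (s, p.2) (t, q.2)) p.1 q.1 = _
    rw [show (Matrix.of fun s t => (ρ + σ) (s, p.2) (t, q.2)) =
        (Matrix.of fun s t => ρ (s, p.2) (t, q.2)) + (Matrix.of fun s t => σ (s, p.2) (t, q.2))
      from rfl, map_add]
    rfl
  map_smul' c ρ := by
    ext p q
    show f (Matrix.of fun s t => (c • ρ) (s, p.2) (t, q.2)) p.1 q.1 = _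
    rw [show (Matrix.of fun s t => (c • ρ) (s, p.2) (t, q.2)) =
        c • (Matrix.of fun s t => ρ (s, p.2) (t, q.2)) from rfl, LinearMap.map_smul]
    rfl

theorem sliceMap_kronecker {da db : ℕ}
    (f : Matrix (Fin da) (Fin da) ℂ →ₗ[ℂ] Matrix (Fin db) (Fin db) ℂ) (k : ℕ)
    (P : Matrix (Fin da) (Fin da) ℂ) (Q : Matrix (Fin k) (Fin k) ℂ) :
    sliceMap f k (P ⊗ₖ Q) = f P ⊗ₖ Q := by
  ext ⟨p1, p2⟩ ⟨q1, q2⟩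
  show f (Matrix.of fun s t => (P ⊗ₖ Q) (s, p2) (t, q2)) p1 q1 = _
  rw [show (Matrix.of fun s t => (P ⊗ₖ Q) (s, p2) (t, q2)) = Q p2 q2 • P from by
      ext s t; simp [Matrix.kroneckerMap_apply, mul_comm], LinearMap.map_smul]
  simp [Matrix.kroneckerMap_apply, mul_comm]

/-- Conjugation of a linear map on `L`-spaces into a map of matrices. -/
noncomputable def matHom (v w : List Λ) (f : ↑(L dm (Ty.elem v)) →ₗ[ℂ] ↑(L dm (Ty.elem w))) :
    Matrix (Fin (dimw dm v)) (Fin (dimw dm v)) ℂ →ₗ[ℂ]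
      Matrix (Fin (dimw dm w)) (Fin (dimw dm w)) ℂ :=
  ((matEquivL dm w).toLinearMap.comp f).comp (matEquivL dm v).symm.toLinearMap

theorem key (A B w : List Λ) (f : ↑(L dm (Ty.elem A)) →ₗ[ℂ] ↑(L dm (Ty.elem B)))
    (ρ : ↑(L dm ((Ty.elem A).par (Ty.elem w)))) :
    toMat dm (castL dm (Ty.par_elem_elem B w) (parEquiv dm (Ty.elem B) (Ty.elem w)
        (LinearMap.rTensor ↑(L dm (Ty.elem w)) f ((parEquiv dm (Ty.elem A) (Ty.elem w)).symm ρ))))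
      = ((sliceMap (matHom dm A B f) (dimw dm w))
          ((toMat dm (castL dm (Ty.par_elem_elem A w) ρ)).submatrix (fpe dm A w) (fpe dm A w))
        ).submatrix (fpe dm B w).symm (fpe dm B w).symm := by
  obtain ⟨t, rfl⟩ : ∃ t, parEquiv dm (Ty.elem A) (Ty.elem w) t = ρ :=
    ⟨(parEquiv dm (Ty.elem A) (Ty.elem w)).symm ρ, by simp⟩
  rw [LinearEquiv.symm_apply_apply]
  induction t with
  | zero =>
    simp only [map_zero]
    rw [show toMat dm (0 : ↑(L dm (Ty.elem (B ++ w)))) = 0 from rfl,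
      show toMat dm (0 : ↑(L dm (Ty.elem (A ++ w)))) = 0 from rfl]
    simp
  | tmul P Q =>
    rw [LinearMap.rTensor_tmul, parEquiv_elem_tmul, parEquiv_elem_tmul]
    have : ((toMat dm P ⊗ₖ toMat dm Q).submatrix (fpe dm A w).symm (fpe dm A w).symm).submatrix
        (fpe dm A w) (fpe dm A w) = toMat dm P ⊗ₖ toMat dm Q := by
      simp [Matrix.submatrix_submatrix]
    rw [this, sliceMap_kronecker]
    rfl
  | add s t hs ht =>
    have h2 : ∀ (X Y : ↑(L dm (Ty.elem (B ++ w)))),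
        toMat dm (X + Y) = toMat dm X + toMat dm Y := fun _ _ => rfl
    have h3 : ∀ (X Y : ↑(L dm (Ty.elem (A ++ w)))),
        toMat dm (X + Y) = toMat dm X + toMat dm Y := fun _ _ => rfl
    simp only [map_add, h2, h3, Matrix.submatrix_add, Pi.add_apply]
    rw [hs, ht]

end HigherOrder
open HigherOrder in
open scoped ComplexOrder in
/-- For elementary types `A` and `B` (provided the alphabet contains a label of dimension at
least two), `K (A → B)` is exactly the set of completely positive maps
`End(H_A) → End(H_B)` in the standard sense: tensoring with the identity of any
finite-dimensional Hilbert space `W = ℂ^k` sends positive semidefinite operators to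
positive semidefinite operators. -/
theorem K_arrow_elem_iff_completely_positive {Λ : Type} (dm : Λ → ℕ)
    (hC : ∃ C : Λ, 2 ≤ dm C) (A B : List Λ)
    (M : ↑(L dm (Ty.arrow (Ty.elem A) (Ty.elem B)))) :
    M ∈ K dm (Ty.arrow (Ty.elem A) (Ty.elem B)) ↔
      ∀ (k : ℕ) (ρ : Matrix (Fin (dimw dm A) × Fin k) (Fin (dimw dm A) × Fin k) ℂ),
        ρ.PosSemidef →
        (Matrix.of fun p q : Fin (dimw dm B) × Fin k =>
          toMat dm (app dm M (ofMat dm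
            (Matrix.of fun s t : Fin (dimw dm A) => ρ (s, p.2) (t, q.2)))) p.1 q.1).PosSemidef := by
  constructor
  · intro hM k ρ hρ
    obtain ⟨C, hC2⟩ := hC
    set w := List.replicate k C with hw
    have hdw : dimw dm w = dm C ^ k := by simp [dimw, hw]
    have hk : k ≤ dimw dm w := by
      rw [hdw]
      calc k ≤ 2 ^ k := (Nat.lt_two_pow_self (n := k)).le
        _ ≤ dm C ^ k := Nat.pow_le_pow_left hC2 k
    obtain ⟨Lm, hL⟩ : ∃ Lm, ρ = Lm.conjTranspose * Lm := by
      open scoped MatrixOrder in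
      exact CStarAlgebra.nonneg_iff_eq_star_mul_self.mp hρ.nonneg
    set Lb : Matrix (Fin (dimw dm A) × Fin k) (Fin (dimw dm A) × Fin (dimw dm w)) ℂ :=
      Matrix.of fun p q => if h : (q.2 : ℕ) < k then Lm p (q.1, ⟨q.2, h⟩) else 0 with hLb
    set ρt : Matrix (Fin (dimw dm A) × Fin (dimw dm w))
        (Fin (dimw dm A) × Fin (dimw dm w)) ℂ := Lb.conjTranspose * Lb with hρt
    have hρtPSD : ρt.PosSemidef := Matrix.posSemidef_conjTranspose_mul_self Lb
    have hLbapp : ∀ (p : Fin (dimw dm A) × Fin k) (s : Fin (dimw dm A)) (i : Fin k),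
        Lb p (s, Fin.castLE hk i) = Lm p (s, i) := by
      intro p s i
      simp only [hLb, Matrix.of_apply]
      rw [dif_pos (by simpa using i.isLt)]
      congr 1
    have hent : ∀ (s t : Fin (dimw dm A)) (i j : Fin k),
        ρt (s, Fin.castLE hk i) (t, Fin.castLE hk j) = ρ (s, i) (t, j) := by
      intro s t i j
      rw [hρt, hL]
      simp only [Matrix.mul_apply, Matrix.conjTranspose_apply]
      exact Finset.sum_congr rfl fun p _ => by rw [hLbapp, hLbapp]
    have hρin : (castL dm (Ty.par_elem_elem A w)).symm
        (ofMat dm (ρt.submatrix (fpe dm A w).symm (fpe dm A w).symm)) ∈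
        K dm ((Ty.elem A).par (Ty.elem w)) := by
      rw [mem_K_of_eq_elem dm (Ty.par_elem_elem A w), LinearEquiv.apply_symm_apply]
      exact hρtPSD.submatrix _
    have hzw : ((Ty.elem w).arrow (Ty.elem w)).ord = ((Ty.elem A).arrow (Ty.elem B)).ord := by
      simp [Ty.ord]
    have hres := (mem_K_arrow_iff dm M).mp hM (Ty.elem w) hzw _ hρin
    rw [mem_K_of_eq_elem dm (Ty.par_elem_elem B w), app_parMap_id dm hzw, key,
      LinearEquiv.apply_symm_apply] at hres
    have hsub : ((toMat dm (ofMat dm (ρt.submatrix (fpe dm A w).symm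
        (fpe dm A w).symm))).submatrix (fpe dm A w) (fpe dm A w)) = ρt := by
      ext p q
      show (ρt.submatrix (fpe dm A w).symm (fpe dm A w).symm)
        ((fpe dm A w) p) ((fpe dm A w) q) = ρt p q
      simp
    rw [hsub] at hres
    have hS : ((sliceMap (matHom dm A B (toHom dm M)) (dimw dm w)) ρt).PosSemidef :=
      (Matrix.posSemidef_submatrix_equiv (fpe dm B w).symm).mp hres
    have heq : (Matrix.of fun p q : Fin (dimw dm B) × Fin k =>
          toMat dm (app dm M (ofMat dm
            (Matrix.of fun s t : Fin (dimw dm A) => ρ (s, p.2) (t, q.2)))) p.1 q.1)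
        = ((sliceMap (matHom dm A B (toHom dm M)) (dimw dm w)) ρt).submatrix
            (fun p => (p.1, Fin.castLE hk p.2)) (fun q => (q.1, Fin.castLE hk q.2)) := by
      ext ⟨p1, p2⟩ ⟨q1, q2⟩
      show matHom dm A B (toHom dm M)
          (Matrix.of fun s t : Fin (dimw dm A) => ρ (s, p2) (t, q2)) p1 q1 =
        matHom dm A B (toHom dm M)
          (Matrix.of fun s t : Fin (dimw dm A) =>
            ρt (s, Fin.castLE hk p2) (t, Fin.castLE hk q2)) p1 q1
      rw [show (Matrix.of fun s t : Fin (dimw dm A) => ρ (s, p2) (t, q2)) =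
          (Matrix.of fun s t : Fin (dimw dm A) =>
            ρt (s, Fin.castLE hk p2) (t, Fin.castLE hk q2)) from by
        ext s t; exact (hent s t p2 q2).symm]
    rw [heq]
    exact hS.submatrix _
  · intro h
    rw [mem_K_arrow_iff]
    intro z hz ρ hρ
    cases z with
    | arrow c d => simp [Ty.ord] at hz
    | elem w =>
      rw [mem_K_of_eq_elem dm (Ty.par_elem_elem B w), app_parMap_id dm hz, key]
      apply Matrix.PosSemidef.submatrix
      have hσ : ((toMat dm (castL dm (Ty.par_elem_elem A w) ρ)).submatrix
          (fpe dm A w) (fpe dm A w)).PosSemidef :=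
        ((mem_K_of_eq_elem dm (Ty.par_elem_elem A w) ρ).mp hρ).submatrix _
      exact h (dimw dm w) _ hσ
end
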